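/- Let d ≥ 1 and M > 0. There exists a constant C > 0 depending only on d and M such that the following holds. Let u : ℝ × ℝ^d → ℝ be twice continuously differentiable with all partial derivatives (jointly in time and space) of order ≤ 2 bounded in absolute value by M, let φ : ℝ^d → ℝ be twice continuously differentiable with all partial derivatives of order ≤ 2 bounded in absolute value by M, and suppose u(T, x) = φ(x) for all x ∈ ℝ^d, where T ∈ ℝ. Let A ∈ ℝ^{d×d} be symmetric and β ∈ ℝ^d with all entries bounded in absolute value by M; let μ ∈ (0, M], γ̄, c̄, ḡ, ψ̄, κ ∈ [−M, M], z ∈ ℝ^d, and let n ∈ ℝ^d be a unit vector. Assume: (PDE at (T,z)) ∂_t u(T,z) + 𝒜_{A,β}φ(z) + c̄ φ(z) + ḡ = 0, and (sticky boundary relation at (T,z)) −μ 𝒜_{A,β}φ(z) + ∇φ(z)·n + γ̄ φ(z) = ψ̄. Let h ∈ (0,1), r ∈ (0, √h], and t′ ∈ ℝ with t′ ≤ T ≤ t′ + 2μr, and set p := (T − t′)/(2μ) (so 0 ≤ p ≤ r). Let Y_k > 0, Z′ ∈ ℝ, and define Y′ = (1 + hκ)Y_k, Y_χ = Y′ + 2rγ̄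 Y_k + 2pμc̄ Y_k, and Z_χ = Z′ − 2μ(r − p) 𝒜_{A,β}φ(z) Y_k + 2pμḡ Y_k − 2rψ̄ Y_k. Then |u(T, z + rn)·Y_χ + Z_χ − u(t′, z − rn)·Y′ − Z′| ≤ C h Y_k. -/

import Mathlib

theorem sticky_lip {E F : Type*} [NormedAddCommGroup E] [NormedSpace ℝ E]
    [NormedAddCommGroup F] [NormedSpace ℝ F] {f : E → F} (hf : Differentiable ℝ f)
    {M : ℝ} (hb : ∀ x, ‖fderiv ℝ f x‖ ≤ M) (x y : E) : ‖f y - f x‖ ≤ M * ‖y - x‖ :=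
  Convex.norm_image_sub_le_of_norm_fderiv_le (fun a _ => hf a) (fun a _ => hb a)
    convex_univ (Set.mem_univ x) (Set.mem_univ y)

theorem sticky_taylor {E : Type*} [NormedAddCommGroup E] [NormedSpace ℝ E]
    {f : E → ℝ} (hf : ContDiff ℝ 2 f) {M : ℝ}
    (hb : ∀ x, ‖fderiv ℝ (fderiv ℝ f) x‖ ≤ M) (x v : E) :
    |f (x + v) - f x - fderiv ℝ f x v| ≤ M * ‖v‖ ^ 2 := by
  have hM0 : 0 ≤ M := le_trans (norm_nonneg (fderiv ℝ (fderiv ℝ f) x)) (hb x)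
  have hfd : Differentiable ℝ f := hf.differentiable (by norm_num)
  have hfd1 : Differentiable ℝ (fderiv ℝ f) :=
    (hf.fderiv_right (m := 1) (by norm_num)).differentiable (by norm_num)
  have hlip : ∀ a b : E, ‖fderiv ℝ f a - fderiv ℝ f b‖ ≤ M * ‖a - b‖ :=
    fun a b => sticky_lip hfd1 hb b a
  have hder : ∀ t : ℝ, HasDerivAt (fun s : ℝ => f (x + s • v) - s * fderiv ℝ f x v)
      (fderiv ℝ f (x + t • v) v - fderiv ℝ f x v) t := by
    intro t
    have h1 : HasDerivAt (fun s : ℝ => x + s • v) v t := by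
      simpa using ((hasDerivAt_id t).smul_const v).const_add x
    have h2 : HasDerivAt (fun s : ℝ => f (x + s • v)) (fderiv ℝ f (x + t • v) v) t :=
      (hfd (x + t • v)).hasFDerivAt.comp_hasDerivAt t h1
    exact h2.sub (hasDerivAt_mul_const (fderiv ℝ f x v))
  have key := norm_image_sub_le_of_norm_deriv_le_segment'
      (f := fun s : ℝ => f (x + s • v) - s * fderiv ℝ f x v)
      (f' := fun s : ℝ => fderiv ℝ f (x + s • v) v - fderiv ℝ f x v)
      (a := (0:ℝ)) (b := (1:ℝ)) (C := M * ‖v‖ ^ 2)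
      (fun s _ => (hder s).hasDerivWithinAt) ?_ 1 (Set.right_mem_Icc.2 zero_le_one)
  · simp only [one_smul, zero_smul, add_zero, one_mul, zero_mul, sub_zero, mul_one,
      Real.norm_eq_abs] at key
    calc |f (x + v) - f x - fderiv ℝ f x v|
        = |f (x + v) - fderiv ℝ f x v - f x| := by ring_nf
      _ ≤ M * ‖v‖ ^ 2 := key
  · intro s hs
    have h1 : fderiv ℝ f (x + s • v) v - fderiv ℝ f x v
        = (fderiv ℝ f (x + s • v) - fderiv ℝ f x) v := by
      simp [ContinuousLinearMap.sub_apply]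
    show ‖fderiv ℝ f (x + s • v) v - fderiv ℝ f x v‖ ≤ M * ‖v‖ ^ 2
    rw [h1]
    calc ‖(fderiv ℝ f (x + s • v) - fderiv ℝ f x) v‖
        ≤ ‖fderiv ℝ f (x + s • v) - fderiv ℝ f x‖ * ‖v‖ :=
          ContinuousLinearMap.le_opNorm _ _
      _ ≤ (M * ‖x + s • v - x‖) * ‖v‖ := by
          apply mul_le_mul_of_nonneg_right _ (norm_nonneg v)
          simpa using hlip (x + s • v) x
      _ ≤ M * ‖v‖ ^ 2 := by
          have : ‖x + s • v - x‖ ≤ ‖v‖ := by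
            simp only [add_sub_cancel_left, norm_smul, Real.norm_eq_abs]
            have hs1 : |s| ≤ 1 := by
              rw [abs_of_nonneg hs.1]; exact hs.2.le
            nlinarith [norm_nonneg v]
          calc M * ‖x + s • v - x‖ * ‖v‖ ≤ M * ‖v‖ * ‖v‖ := by
                exact mul_le_mul_of_nonneg_right (mul_le_mul_of_nonneg_left this hM0) (norm_nonneg v)
            _ = M * ‖v‖ ^ 2 := by ring


/-- The second-order differential operator
`𝒜_{A,β} v (y) = (1/2) ∑_{i,j} A i j ∂²v/∂yᵢ∂yⱼ (y) + ∑ i, β i ∂v/∂yᵢ (y)`. -/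
noncomputable def stickyGen {d : ℕ} (A : Matrix (Fin d) (Fin d) ℝ) (β : Fin d → ℝ)
    (v : (Fin d → ℝ) → ℝ) (y : Fin d → ℝ) : ℝ :=
  (1 / 2) * ∑ i, ∑ j, A i j *
      iteratedFDeriv ℝ 2 v y ![Pi.single i 1, Pi.single j 1]
    + ∑ i, β i * fderiv ℝ v y (Pi.single i 1)

set_option maxHeartbeats 1000000 in
/-- Lemma 4.4 (Case IIIb of the sticky Euler scheme): one-step error estimate for the
terminal-time correction step, where the sticky time update overshoots `T`. -/
theorem sticky_euler_caseIIIb_one_step (d : ℕ) (hd : 1 ≤ d) (M : ℝ) (hM : 0 < M) :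
    ∃ C : ℝ, 0 < C ∧
      ∀ u : ℝ × (Fin d → ℝ) → ℝ, ContDiff ℝ 2 u →
      (∀ m : ℕ, m ≤ 2 → ∀ p : ℝ × (Fin d → ℝ), ‖iteratedFDeriv ℝ m u p‖ ≤ M) →
      ∀ φ : (Fin d → ℝ) → ℝ, ContDiff ℝ 2 φ →
      (∀ m : ℕ, m ≤ 2 → ∀ y : Fin d → ℝ, ‖iteratedFDeriv ℝ m φ y‖ ≤ M) →
      ∀ T : ℝ, (∀ x : Fin d → ℝ, u (T, x) = φ x) →
      ∀ A : Matrix (Fin d) (Fin d) ℝ, A.IsSymm → (∀ i j, |A i j| ≤ M) →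
      ∀ β : Fin d → ℝ, (∀ i, |β i| ≤ M) →
      ∀ μ : ℝ, 0 < μ → μ ≤ M →
      ∀ γ c g ψ κ : ℝ, |γ| ≤ M → |c| ≤ M → |g| ≤ M → |ψ| ≤ M → |κ| ≤ M →
      ∀ z n : Fin d → ℝ, (∑ i, (n i) ^ 2 = 1) →
      -- the parabolic PDE holds at (T, z)
      (deriv (fun τ => u (τ, z)) T + stickyGen A β φ z + c * φ z + g = 0) →
      -- the sticky (second-order) boundary relation holds at (T, z)
      (-μ * stickyGen A β φ z + fderiv ℝ φ z n + γ * φ z = ψ) →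
      ∀ h r t' : ℝ, 0 < h → h < 1 → 0 < r → r ≤ Real.sqrt h →
      t' ≤ T → T ≤ t' + 2 * μ * r →
      ∀ Yk Z' : ℝ, 0 < Yk →
      |u (T, z + r • n) *
            ((1 + h * κ) * Yk + 2 * r * γ * Yk
              + 2 * ((T - t') / (2 * μ)) * μ * c * Yk)
          + (Z' - 2 * μ * (r - (T - t') / (2 * μ)) * stickyGen A β φ z * Yk
              + 2 * ((T - t') / (2 * μ)) * μ * g * Yk - 2 * r * ψ * Yk)
          - u (t', z - r • n) * ((1 + h * κ) * Yk) - Z'|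
        ≤ C * h * Yk := by
  refine ⟨(1 + M) * (2 * M + 2 * M ^ 2 + 4 * M ^ 3) + (2 * M ^ 2 + 2 * M ^ 3)
      + (4 * M ^ 2 + 4 * M ^ 3) + 1, by positivity, ?_⟩
  intro u hu hub φ hφ hφb T hTφ A hAs hAb β hβb μ hμ hμM γ c g ψ κ hγ hc hg hψ hκ
    z n hn hpde hbdry h r t' hh0 hh1 hr0 hrs ht'T hTt' Yk Z' hYk
  have hM0 : (0:ℝ) ≤ M := hM.le
  -- derivative bounds
  have hu0 : ∀ p, |u p| ≤ M := fun p => by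
    have := hub 0 (by norm_num) p
    rwa [norm_iteratedFDeriv_zero, Real.norm_eq_abs] at this
  have hu1 : ∀ p, ‖fderiv ℝ u p‖ ≤ M := fun p => by
    have h1 := hub 1 (by norm_num) p
    rw [show (1:ℕ) = 0 + 1 from rfl, ← norm_iteratedFDeriv_fderiv,
      norm_iteratedFDeriv_zero] at h1
    exact h1
  have hu2 : ∀ p, ‖fderiv ℝ (fderiv ℝ u) p‖ ≤ M := fun p => by
    have h1 := hub 2 (by norm_num) p
    rw [show (2:ℕ) = 1 + 1 from rfl, ← norm_iteratedFDeriv_fderiv,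
      show (1:ℕ) = 0 + 1 from rfl, ← norm_iteratedFDeriv_fderiv,
      norm_iteratedFDeriv_zero] at h1
    exact h1
  have hφ1 : ∀ y, ‖fderiv ℝ φ y‖ ≤ M := fun y => by
    have h1 := hφb 1 (by norm_num) y
    rw [show (1:ℕ) = 0 + 1 from rfl, ← norm_iteratedFDeriv_fderiv,
      norm_iteratedFDeriv_zero] at h1
    exact h1
  have hφ2 : ∀ y, ‖fderiv ℝ (fderiv ℝ φ) y‖ ≤ M := fun y => by
    have h1 := hφb 2 (by norm_num) y
    rw [show (2:ℕ) = 1 + 1 from rfl, ← norm_iteratedFDeriv_fderiv,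
      show (1:ℕ) = 0 + 1 from rfl, ← norm_iteratedFDeriv_fderiv,
      norm_iteratedFDeriv_zero] at h1
    exact h1
  have hudiff : Differentiable ℝ u := hu.differentiable (by norm_num)
  have hudiff1 : Differentiable ℝ (fderiv ℝ u) :=
    (hu.fderiv_right (m := 1) (by norm_num)).differentiable (by norm_num)
  -- elementary norm facts
  have hn1 : ‖n‖ ≤ 1 := by
    rw [pi_norm_le_iff_of_nonneg zero_le_one]
    intro i
    rw [Real.norm_eq_abs]
    have h1 : n i ^ 2 ≤ 1 := by
      rw [← hn]
      exact Finset.single_le_sum (fun j _ => sq_nonneg (n j)) (Finset.mem_univ i)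
    nlinarith [abs_nonneg (n i), sq_abs (n i)]
  have hrn : ‖r • n‖ ≤ r := by
    rw [norm_smul, Real.norm_eq_abs, abs_of_pos hr0]
    nlinarith [norm_nonneg n]
  have hone : ‖((1:ℝ), (0 : Fin d → ℝ))‖ = 1 := by
    rw [Prod.norm_def]
    simp
  have hr1 : r ≤ 1 := by
    refine le_trans hrs ?_
    rw [show (1:ℝ) = Real.sqrt 1 by simp]
    exact Real.sqrt_le_sqrt hh1.le
  have hr2h : r ^ 2 ≤ h := by
    have h1 := pow_le_pow_left₀ hr0.le hrs 2
    rwa [Real.sq_sqrt hh0.le] at h1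
  have hTt : 0 ≤ T - t' := sub_nonneg.mpr ht'T
  have hTt2 : T - t' ≤ 2 * M * r := by nlinarith
  -- notations
  set Fn := fderiv ℝ φ z n with hFndef
  set Dt := fderiv ℝ u (T, z) ((1:ℝ), (0 : Fin d → ℝ)) with hDtdef
  set Dt' := fderiv ℝ u (T, z - r • n) ((1:ℝ), (0 : Fin d → ℝ)) with hDt'def
  set e1 := φ (z + r • n) - φ z - r * Fn with he1def
  set e2 := φ (z - r • n) - φ z + r * Fn with he2def
  set e3 := u (t', z - r • n) - φ (z - r • n) - (t' - T) * Dt' with he3def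
  set e4 := Dt' - Dt with he4def
  -- the time derivative in the PDE is Dt
  have hcurve : HasDerivAt (fun τ : ℝ => ((τ, z) : ℝ × (Fin d → ℝ)))
      ((1:ℝ), (0 : Fin d → ℝ)) T := HasDerivAt.prodMk (hasDerivAt_id T) (hasDerivAt_const T z)
  have hderiv_eq : deriv (fun τ => u (τ, z)) T = Dt :=
    ((hudiff (T, z)).hasFDerivAt.comp_hasDerivAt T hcurve).deriv
  have hpde' : Dt + stickyGen A β φ z + c * φ z + g = 0 := by
    rw [← hderiv_eq]; exact hpde
  -- bounds on Fn, Dt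
  have hFnb : |Fn| ≤ M := by
    rw [hFndef, ← Real.norm_eq_abs]
    calc ‖fderiv ℝ φ z n‖ ≤ ‖fderiv ℝ φ z‖ * ‖n‖ := ContinuousLinearMap.le_opNorm _ _
      _ ≤ M * 1 := mul_le_mul (hφ1 z) hn1 (norm_nonneg _) hM0
      _ = M := mul_one M
  have hDtb : |Dt| ≤ M := by
    rw [hDtdef, ← Real.norm_eq_abs]
    calc ‖fderiv ℝ u (T, z) ((1:ℝ), (0 : Fin d → ℝ))‖
        ≤ ‖fderiv ℝ u (T, z)‖ * ‖((1:ℝ), (0 : Fin d → ℝ))‖ :=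
          ContinuousLinearMap.le_opNorm _ _
      _ ≤ M := by rw [hone, mul_one]; exact hu1 _
  -- Taylor estimates
  have hE1 : |e1| ≤ M * h := by
    have ht1 := sticky_taylor hφ hφ2 z (r • n)
    have h2 : fderiv ℝ φ z (r • n) = r * Fn := by
      rw [map_smul, hFndef]; rfl
    rw [h2] at ht1
    rw [he1def]
    refine le_trans ht1 ?_
    have h3 : ‖r • n‖ ^ 2 ≤ h := le_trans (pow_le_pow_left₀ (norm_nonneg _) hrn 2) hr2h
    exact mul_le_mul_of_nonneg_left h3 hM0
  have hE2 : |e2| ≤ M * h := by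
    have ht2 := sticky_taylor hφ hφ2 z (-(r • n))
    have h2 : fderiv ℝ φ z (-(r • n)) = -(r * Fn) := by
      rw [map_neg, map_smul, hFndef]; rfl
    rw [h2, ← sub_eq_add_neg, sub_neg_eq_add, norm_neg] at ht2
    rw [he2def]
    refine le_trans ht2 ?_
    have h3 : ‖r • n‖ ^ 2 ≤ h := le_trans (pow_le_pow_left₀ (norm_nonneg _) hrn 2) hr2h
    exact mul_le_mul_of_nonneg_left h3 hM0
  have hE3 : |e3| ≤ 4 * M ^ 3 * h := by
    have ht3 := sticky_taylor hu hu2 (T, z - r • n) ((t' - T, (0 : Fin d → ℝ)))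
    have hpt : ((T : ℝ), z - r • n) + ((t' - T : ℝ), (0 : Fin d → ℝ)) = (t', z - r • n) := by
      rw [Prod.mk_add_mk]; simp
    have harg : ((t' - T : ℝ), (0 : Fin d → ℝ)) = (t' - T) • ((1:ℝ), (0 : Fin d → ℝ)) := by
      rw [Prod.smul_mk]; simp
    rw [hpt, harg, map_smul, smul_eq_mul, norm_smul, hone, mul_one, hTφ] at ht3
    rw [← hDt'def, ← he3def] at ht3
    refine le_trans ht3 ?_
    rw [Real.norm_eq_abs, abs_sub_comm, abs_of_nonneg hTt]
    have hs1 : (T - t') ^ 2 ≤ 4 * M ^ 2 * r ^ 2 := by nlinarith [hTt, hTt2]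
    linarith [mul_le_mul_of_nonneg_left hs1 hM0,
      mul_le_mul_of_nonneg_left hr2h (by positivity : (0:ℝ) ≤ 4 * M ^ 3)]
  have hE4 : |e4| ≤ M * r := by
    have hl := sticky_lip hudiff1 hu2 (T, z) (T, z - r • n)
    have h1 : Dt' - Dt = (fderiv ℝ u (T, z - r • n) - fderiv ℝ u (T, z))
        ((1:ℝ), (0 : Fin d → ℝ)) := by
      rw [hDt'def, hDtdef, ContinuousLinearMap.sub_apply]
    rw [he4def, h1, ← Real.norm_eq_abs]
    calc ‖(fderiv ℝ u (T, z - r • n) - fderiv ℝ u (T, z)) ((1:ℝ), (0 : Fin d → ℝ))‖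
        ≤ ‖fderiv ℝ u (T, z - r • n) - fderiv ℝ u (T, z)‖ * ‖((1:ℝ), (0 : Fin d → ℝ))‖ :=
          ContinuousLinearMap.le_opNorm _ _
      _ ≤ (M * ‖((T, z - r • n) : ℝ × (Fin d → ℝ)) - (T, z)‖) * 1 := by
          rw [hone]; exact mul_le_mul_of_nonneg_right hl zero_le_one
      _ ≤ M * r := by
          rw [mul_one]
          have h2 : ((T, z - r • n) : ℝ × (Fin d → ℝ)) - (T, z) = (0, -(r • n)) := by
            rw [Prod.mk_sub_mk]; simp
          rw [h2]
          have h3 : ‖((0:ℝ), -(r • n))‖ ≤ r := by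
            rw [Prod.norm_def]
            simp only [norm_zero, norm_neg]
            exact max_le hr0.le hrn
          exact mul_le_mul_of_nonneg_left h3 hM0
  -- expansions of the two u-values
  have hUp : u (T, z + r • n) = φ z + r * Fn + e1 := by
    rw [hTφ, he1def]; ring
  have hUm : u (t', z - r • n) = φ z - r * Fn + e2 + (t' - T) * (Dt + e4) + e3 := by
    rw [he3def, he4def, he2def]; ring
  -- clearing the divisions
  have hμ0 : μ ≠ 0 := ne_of_gt hμ
  have hdiv1 : 2 * ((T - t') / (2 * μ)) * μ = T - t' := by
    field_simp
    try ring
  have hdiv2 : 2 * μ * (r - (T - t') / (2 * μ)) = 2 * μ * r - (T - t') := by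
    field_simp
  clear_value Fn Dt Dt' e1 e2 e3 e4
  clear hFndef hDtdef hDt'def he1def he2def he3def he4def
  -- the key algebraic identity
  have key : u (T, z + r • n) *
            ((1 + h * κ) * Yk + 2 * r * γ * Yk
              + 2 * ((T - t') / (2 * μ)) * μ * c * Yk)
          + (Z' - 2 * μ * (r - (T - t') / (2 * μ)) * stickyGen A β φ z * Yk
              + 2 * ((T - t') / (2 * μ)) * μ * g * Yk - 2 * r * ψ * Yk)
          - u (t', z - r • n) * ((1 + h * κ) * Yk) - Z'
      = Yk * ((1 + h * κ) * (e1 - e2 - e3 + (T - t') * e4)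
          + h * κ * (2 * r * Fn + (T - t') * Dt)
          + (r * Fn + e1) * (2 * r * γ + (T - t') * c)) := by
    rw [hdiv1, hdiv2, hUp, hUm]
    linear_combination (2 * r * Yk) * hbdry + ((T - t') * Yk) * hpde'
  rw [key, abs_mul, abs_of_pos hYk]
  clear key hu hub hφ hφb hTφ hAs hAb hβb hn hpde hbdry hu0 hu1 hu2 hφ1 hφ2 hudiff
    hudiff1 hcurve hderiv_eq hpde' hdiv1 hdiv2 hUp hUm hn1 hrn hone
  clear u φ A β z n
  -- bound the error term
  have hκ' : |1 + h * κ| ≤ 1 + M := by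
    calc |1 + h * κ| ≤ |1| + |h * κ| := abs_add_le _ _
      _ = 1 + h * |κ| := by rw [abs_one, abs_mul, abs_of_pos hh0]
      _ ≤ 1 + M := by nlinarith [abs_nonneg κ]
  have hB1 : |(1 + h * κ) * (e1 - e2 - e3 + (T - t') * e4)|
      ≤ (1 + M) * (2 * M + 2 * M ^ 2 + 4 * M ^ 3) * h := by
    rw [abs_mul]
    have h4 : |(T - t') * e4| ≤ 2 * M ^ 2 * h := by
      rw [abs_mul, abs_of_nonneg hTt]
      calc (T - t') * |e4| ≤ (2 * M * r) * (M * r) := by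
            apply mul_le_mul hTt2 hE4 (abs_nonneg _) (by positivity)
        _ = 2 * M ^ 2 * r ^ 2 := by ring
        _ ≤ 2 * M ^ 2 * h := by nlinarith
    have h5 : |e1 - e2 - e3 + (T - t') * e4| ≤ (2 * M + 2 * M ^ 2 + 4 * M ^ 3) * h := by
      have a1 := abs_le.mp hE1
      have a2 := abs_le.mp hE2
      have a3 := abs_le.mp hE3
      have a4 := abs_le.mp h4
      rw [abs_le]
      constructor <;> linarith
    calc |1 + h * κ| * |e1 - e2 - e3 + (T - t') * e4|
        ≤ (1 + M) * ((2 * M + 2 * M ^ 2 + 4 * M ^ 3) * h) :=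
          mul_le_mul hκ' h5 (abs_nonneg _) (by positivity)
      _ = (1 + M) * (2 * M + 2 * M ^ 2 + 4 * M ^ 3) * h := by ring
  have hB2 : |h * κ * (2 * r * Fn + (T - t') * Dt)| ≤ (2 * M ^ 2 + 2 * M ^ 3) * h := by
    rw [abs_mul]
    have b1 : |h * κ| ≤ h * M := by
      rw [abs_mul, abs_of_pos hh0]
      exact mul_le_mul_of_nonneg_left hκ hh0.le
    have b2 : |2 * r * Fn + (T - t') * Dt| ≤ 2 * M + 2 * M ^ 2 := by
      have c1 : |2 * r * Fn| ≤ 2 * M := by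
        rw [abs_mul, abs_of_pos (by linarith : (0:ℝ) < 2 * r)]
        nlinarith [abs_nonneg Fn]
      have c2 : |(T - t') * Dt| ≤ 2 * M ^ 2 := by
        rw [abs_mul, abs_of_nonneg hTt]
        calc (T - t') * |Dt| ≤ (2 * M * r) * M := by
              apply mul_le_mul hTt2 hDtb (abs_nonneg _) (by positivity)
          _ ≤ 2 * M ^ 2 := by nlinarith
      calc |2 * r * Fn + (T - t') * Dt| ≤ |2 * r * Fn| + |(T - t') * Dt| := abs_add_le _ _
        _ ≤ 2 * M + 2 * M ^ 2 := by linarith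
    calc |h * κ| * |2 * r * Fn + (T - t') * Dt|
        ≤ (h * M) * (2 * M + 2 * M ^ 2) := mul_le_mul b1 b2 (abs_nonneg _) (by positivity)
      _ = (2 * M ^ 2 + 2 * M ^ 3) * h := by ring
  have hB3 : |(r * Fn + e1) * (2 * r * γ + (T - t') * c)| ≤ (4 * M ^ 2 + 4 * M ^ 3) * h := by
    rw [abs_mul]
    have b1 : |r * Fn + e1| ≤ r * M + M * h := by
      calc |r * Fn + e1| ≤ |r * Fn| + |e1| := abs_add_le _ _
        _ ≤ r * M + M * h := by
            have : |r * Fn| ≤ r * M := by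
              rw [abs_mul, abs_of_pos hr0]
              exact mul_le_mul_of_nonneg_left hFnb hr0.le
            linarith
    have b2 : |2 * r * γ + (T - t') * c| ≤ (2 * M + 2 * M ^ 2) * r := by
      have c1 : |2 * r * γ| ≤ 2 * M * r := by
        rw [abs_mul, abs_of_pos (by linarith : (0:ℝ) < 2 * r)]
        nlinarith [abs_nonneg γ]
      have c2 : |(T - t') * c| ≤ 2 * M ^ 2 * r := by
        rw [abs_mul, abs_of_nonneg hTt]
        calc (T - t') * |c| ≤ (2 * M * r) * M := by
              apply mul_le_mul hTt2 hc (abs_nonneg _) (by positivity)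
          _ = 2 * M ^ 2 * r := by ring
      calc |2 * r * γ + (T - t') * c| ≤ |2 * r * γ| + |(T - t') * c| := abs_add_le _ _
        _ ≤ (2 * M + 2 * M ^ 2) * r := by linarith
    calc |r * Fn + e1| * |2 * r * γ + (T - t') * c|
        ≤ (r * M + M * h) * ((2 * M + 2 * M ^ 2) * r) :=
          mul_le_mul b1 b2 (abs_nonneg _) (by positivity)
      _ = (2 * M + 2 * M ^ 2) * M * r ^ 2 + (2 * M + 2 * M ^ 2) * M * (h * r) := by ring
      _ ≤ (2 * M + 2 * M ^ 2) * M * h + (2 * M + 2 * M ^ 2) * M * h := by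
          have k2 : h * r ≤ h := by nlinarith
          have pos : (0:ℝ) ≤ (2 * M + 2 * M ^ 2) * M := by positivity
          have i1 := mul_le_mul_of_nonneg_left hr2h pos
          have i2 := mul_le_mul_of_nonneg_left k2 pos
          linarith
      _ = (4 * M ^ 2 + 4 * M ^ 3) * h := by ring
  have hErr : |(1 + h * κ) * (e1 - e2 - e3 + (T - t') * e4)
          + h * κ * (2 * r * Fn + (T - t') * Dt)
          + (r * Fn + e1) * (2 * r * γ + (T - t') * c)|
      ≤ ((1 + M) * (2 * M + 2 * M ^ 2 + 4 * M ^ 3) + (2 * M ^ 2 + 2 * M ^ 3)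
          + (4 * M ^ 2 + 4 * M ^ 3) + 1) * h := by
    calc |(1 + h * κ) * (e1 - e2 - e3 + (T - t') * e4)
          + h * κ * (2 * r * Fn + (T - t') * Dt)
          + (r * Fn + e1) * (2 * r * γ + (T - t') * c)|
        ≤ |(1 + h * κ) * (e1 - e2 - e3 + (T - t') * e4)
          + h * κ * (2 * r * Fn + (T - t') * Dt)|
          + |(r * Fn + e1) * (2 * r * γ + (T - t') * c)| := abs_add_le _ _
      _ ≤ |(1 + h * κ) * (e1 - e2 - e3 + (T - t') * e4)|
          + |h * κ * (2 * r * Fn + (T - t') * Dt)|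
          + |(r * Fn + e1) * (2 * r * γ + (T - t') * c)| := by
            have := abs_add_le ((1 + h * κ) * (e1 - e2 - e3 + (T - t') * e4))
              (h * κ * (2 * r * Fn + (T - t') * Dt))
            linarith
      _ ≤ ((1 + M) * (2 * M + 2 * M ^ 2 + 4 * M ^ 3) + (2 * M ^ 2 + 2 * M ^ 3)
          + (4 * M ^ 2 + 4 * M ^ 3) + 1) * h := by nlinarith [hh0.le]
  calc Yk * |(1 + h * κ) * (e1 - e2 - e3 + (T - t') * e4)
          + h * κ * (2 * r * Fn + (T - t') * Dt)
          + (r * Fn + e1) * (2 * r * γ + (T - t') * c)|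
      ≤ Yk * (((1 + M) * (2 * M + 2 * M ^ 2 + 4 * M ^ 3) + (2 * M ^ 2 + 2 * M ^ 3)
          + (4 * M ^ 2 + 4 * M ^ 3) + 1) * h) := mul_le_mul_of_nonneg_left hErr hYk.le
    _ = ((1 + M) * (2 * M + 2 * M ^ 2 + 4 * M ^ 3) + (2 * M ^ 2 + 2 * M ^ 3)
          + (4 * M ^ 2 + 4 * M ^ 3) + 1) * h * Yk := by ring
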